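/- arXiv:2108.13402 — 7 statements merged into one kernel-verified Lean document; each statement's English description precedes it below -/
import Mathlib

section
/- The quartic surface X in projective 3-space defined by z0^4+z1^4+z2^4+z3^4 - 6(z0^2 z1^2 + z0^2 z2^2 + z0^2 z3^2 + z1^2 z2^2 + z1^2 z3^2 + z2^2 z3^2) = 0 is smooth over the complex numbers; equivalently, the only common complex solution of the four partial derivatives of the defining polynomial is (0,0,0,0). -/
/-- The Mukai quartic polynomial. -/
noncomputable def mukaiF (z0 z1 z2 z3 : ℂ) : ℂ :=
  z0^4 + z1^4 + z2^4 + z3^4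
    - 6 * (z0^2*z1^2 + z0^2*z2^2 + z0^2*z3^2 + z1^2*z2^2 + z1^2*z3^2 + z2^2*z3^2)

private lemma mukai_aux (a b c d s : ℂ) (hs : a^2 + b^2 + c^2 + d^2 = s)
    (ha : a = 0 ∨ 4*a^2 = 3*s) (hb : b = 0 ∨ 4*b^2 = 3*s)
    (hc : c = 0 ∨ 4*c^2 = 3*s) (hd : d = 0 ∨ 4*d^2 = 3*s) : a = 0 := by
  rcases ha with h | ha
  · exact h
  have h2 : a ^ 2 = 0 := by
    rcases hb with rfl | hb <;> rcases hc with rfl | hc <;> rcases hd with rfl | hd <;>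
    first
      | linear_combination ha - 3*hs
      | linear_combination (-1/8)*ha + (-3/8)*hb + (3/2)*hs
      | linear_combination (-1/8)*ha + (-3/8)*hc + (3/2)*hs
      | linear_combination (-1/8)*ha + (-3/8)*hd + (3/2)*hs
      | linear_combination (1/10)*ha + (-3/20)*hb + (-3/20)*hc + (3/5)*hs
      | linear_combination (1/10)*ha + (-3/20)*hb + (-3/20)*hd + (3/5)*hs
      | linear_combination (1/10)*ha + (-3/20)*hc + (-3/20)*hd + (3/5)*hs
      | linear_combination (5/32)*ha + (-3/32)*hb + (-3/32)*hc + (-3/32)*hd + (3/8)*hs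
  exact pow_eq_zero_iff (two_ne_zero) |>.mp h2

/-- The Mukai quartic surface is smooth: the only common zero of the four partial
derivatives of `mukaiF` is the origin. -/
theorem mukai_quartic_smooth :
    ∀ z0 z1 z2 z3 : ℂ,
      4*z0^3 - 12*z0*(z1^2 + z2^2 + z3^2) = 0 →
      4*z1^3 - 12*z1*(z0^2 + z2^2 + z3^2) = 0 →
      4*z2^3 - 12*z2*(z0^2 + z1^2 + z3^2) = 0 →
      4*z3^3 - 12*z3*(z0^2 + z1^2 + z2^2) = 0 →
      z0 = 0 ∧ z1 = 0 ∧ z2 = 0 ∧ z3 = 0 := by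
  intro z0 z1 z2 z3 h0 h1 h2 h3
  set s := z0^2 + z1^2 + z2^2 + z3^2 with hs
  have d0 : z0 = 0 ∨ 4*z0^2 = 3*s := by
    rcases mul_eq_zero.mp (show z0 * (4*z0^2 - 3*s) = 0 by rw [hs]; linear_combination h0/4)
      with h | h
    · exact Or.inl h
    · exact Or.inr (by linear_combination h)
  have d1 : z1 = 0 ∨ 4*z1^2 = 3*s := by
    rcases mul_eq_zero.mp (show z1 * (4*z1^2 - 3*s) = 0 by rw [hs]; linear_combination h1/4)
      with h | h
    · exact Or.inl h
    · exact Or.inr (by linear_combination h)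
  have d2 : z2 = 0 ∨ 4*z2^2 = 3*s := by
    rcases mul_eq_zero.mp (show z2 * (4*z2^2 - 3*s) = 0 by rw [hs]; linear_combination h2/4)
      with h | h
    · exact Or.inl h
    · exact Or.inr (by linear_combination h)
  have d3 : z3 = 0 ∨ 4*z3^2 = 3*s := by
    rcases mul_eq_zero.mp (show z3 * (4*z3^2 - 3*s) = 0 by rw [hs]; linear_combination h3/4)
      with h | h
    · exact Or.inl h
    · exact Or.inr (by linear_combination h)
  exact ⟨mukai_aux z0 z1 z2 z3 s hs.symm d0 d1 d2 d3,
         mukai_aux z1 z0 z2 z3 s (by rw [hs]; ring) d1 d0 d2 d3,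
         mukai_aux z2 z0 z1 z3 s (by rw [hs]; ring) d2 d0 d1 d3,
         mukai_aux z3 z0 z1 z2 s (by rw [hs]; ring) d3 d0 d1 d2⟩
end

section
/- Every point of the plane conic C1 given by z0+z1+z2=0 and z1^2 + z1 z2 + z2^2 + ((3+√10)/2) z3^2 = 0 lies on the Mukai quartic surface X: substituting z0 = -(z1+z2) into the quartic polynomial f yields a polynomial divisible by z1^2 + z1 z2 + z2^2 + ((3+√10)/2) z3^2. -/
open MvPolynomial

/-- The conic `C1` lies on the Mukai quartic: substituting `z0 = -(z1+z2)` into the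
Mukai quartic polynomial yields a polynomial divisible by
`z1^2 + z1 z2 + z2^2 + ((3+√10)/2) z3^2`.  Variables: `X 0 = z1`, `X 1 = z2`, `X 2 = z3`. -/
theorem conic_C1_on_mukai :
    (X 0 ^ 2 + X 0 * X 1 + X 1 ^ 2 + C ((3 + Real.sqrt 10)/2) * X 2 ^ 2 :
        MvPolynomial (Fin 3) ℝ) ∣
      ((-(X 0 + X 1))^4 + (X 0)^4 + (X 1)^4 + (X 2)^4
        - 6 * ((-(X 0 + X 1))^2*(X 0)^2 + (-(X 0 + X 1))^2*(X 1)^2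
            + (-(X 0 + X 1))^2*(X 2)^2 + (X 0)^2*(X 1)^2
            + (X 0)^2*(X 2)^2 + (X 1)^2*(X 2)^2)) := by
  have h10 : (C (Real.sqrt 10) : MvPolynomial (Fin 3) ℝ) ^ 2 = 10 := by
    rw [← map_pow, Real.sq_sqrt (by norm_num : (0:ℝ) ≤ 10)]
    rw [map_ofNat]
  have hc : (2 : MvPolynomial (Fin 3) ℝ) * C ((3 + Real.sqrt 10)/2)
      = 3 + C (Real.sqrt 10) := by
    rw [show (2 : MvPolynomial (Fin 3) ℝ) = C 2 from (map_ofNat _ 2).symm,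
      show (3 : MvPolynomial (Fin 3) ℝ) = C 3 from (map_ofNat _ 3).symm,
      ← map_mul, ← map_add]
    congr 1
    ring
  refine ⟨(2 * C (Real.sqrt 10) - 6) * X 2 ^ 2
      - 4 * (X 0 ^ 2 + X 0 * X 1 + X 1 ^ 2), ?_⟩
  linear_combination
    (2 * (X 0 ^ 2 + X 0 * X 1 + X 1 ^ 2) * X 2 ^ 2
      + (3 - C (Real.sqrt 10)) * X 2 ^ 4) * hc
    - X 2 ^ 4 * h10
end

section
/- Every point of the conic C3 given by z2 + A·z3 = 0 and z0^2 + 2√2 z0 z1 + z1^2 + (3(√5+1)/2) z3^2 = 0, where A = i(√5+1)/2, lies on the Mukai quartic surface X: substituting z2 = -A z3 into f yields a polynomial divisible by z0^2 + 2√2 z0 z1 + z1^2 + (3(√5+1)/2) z3^2. -/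
open MvPolynomial

/-- The conic `C3` lies on the Mukai quartic: with `A = i(√5+1)/2`, substituting
`z2 = -A z3` into the Mukai quartic polynomial yields a polynomial divisible by
`z0^2 + 2√2 z0 z1 + z1^2 + (3(√5+1)/2) z3^2`.
Variables: `X 0 = z0`, `X 1 = z1`, `X 2 = z3`. -/
theorem conic_C3_on_mukai :
    (X 0 ^ 2 + C (2 * (Real.sqrt 2 : ℂ)) * X 0 * X 1 + X 1 ^ 2
        + C (3 * ((Real.sqrt 5 : ℂ) + 1) / 2) * X 2 ^ 2 : MvPolynomial (Fin 3) ℂ) ∣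
      ((X 0)^4 + (X 1)^4 + (C (-(Complex.I * ((Real.sqrt 5 : ℂ) + 1) / 2)) * X 2)^4 + (X 2)^4
        - 6 * ((X 0)^2*(X 1)^2
            + (X 0)^2*(C (-(Complex.I * ((Real.sqrt 5 : ℂ) + 1) / 2)) * X 2)^2
            + (X 0)^2*(X 2)^2
            + (X 1)^2*(C (-(Complex.I * ((Real.sqrt 5 : ℂ) + 1) / 2)) * X 2)^2
            + (X 1)^2*(X 2)^2
            + (C (-(Complex.I * ((Real.sqrt 5 : ℂ) + 1) / 2)) * X 2)^2*(X 2)^2)) := by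
  have s2 : (Real.sqrt 2 : ℂ)^2 = 2 := by
    norm_cast
    rw [Real.sq_sqrt] <;> norm_num
  have s5 : (Real.sqrt 5 : ℂ)^2 = 5 := by
    norm_cast
    rw [Real.sq_sqrt] <;> norm_num
  have hI : (Complex.I)^2 = -1 := Complex.I_sq
  have f1 : (2 * (Real.sqrt 2 : ℂ))^2 = 8 := by linear_combination 4 * s2
  have f2 : (3 * ((Real.sqrt 5 : ℂ) + 1) / 2)^2
      = 3 * (3 * ((Real.sqrt 5 : ℂ) + 1) / 2) + 9 := by linear_combination (9/4) * s5
  have f3 : 3 * (-(Complex.I * ((Real.sqrt 5 : ℂ) + 1) / 2))^2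
      + 3 + 3 * ((Real.sqrt 5 : ℂ) + 1) / 2 = 0 := by
    linear_combination (3*((Real.sqrt 5:ℂ)+1)^2/4) * hI + (-3/4) * s5
  have h1 : (C (2 * (Real.sqrt 2 : ℂ)) : MvPolynomial (Fin 3) ℂ)^2 = 8 := by
    rw [← C_pow, f1]; simp [map_ofNat]
  have h2 : (C (3 * ((Real.sqrt 5 : ℂ) + 1) / 2) : MvPolynomial (Fin 3) ℂ)^2
      = 3 * C (3 * ((Real.sqrt 5 : ℂ) + 1) / 2) + 9 := by
    rw [← C_pow, f2]; push_cast [C_add, C_mul, map_ofNat]; ring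
  have h3 : 3 * (C (-(Complex.I * ((Real.sqrt 5 : ℂ) + 1) / 2)) : MvPolynomial (Fin 3) ℂ)^2
      + 3 + C (3 * ((Real.sqrt 5 : ℂ) + 1) / 2) = 0 := by
    have := congrArg (C : ℂ →+* MvPolynomial (Fin 3) ℂ) f3
    push_cast [C_add, C_mul, C_pow, map_ofNat, map_zero] at this
    linear_combination this
  refine ⟨X 0 ^ 2 - C (2 * (Real.sqrt 2 : ℂ)) * X 0 * X 1 + X 1 ^ 2
      + C (3 * ((Real.sqrt 5 : ℂ) + 1) / 2) * X 2 ^ 2, ?_⟩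
  have h9 : (9 : MvPolynomial (Fin 3) ℂ) ≠ 0 := by norm_num
  refine mul_left_cancel₀ h9 ?_
  linear_combination
    (9 * X 0 ^ 2 * X 1 ^ 2) * h1 + (-8 * X 2 ^ 4) * h2
    + ((3 * (C (-(Complex.I * ((Real.sqrt 5 : ℂ) + 1) / 2)))^2 - 3
        - C (3 * ((Real.sqrt 5 : ℂ) + 1) / 2) - 18) * X 2 ^ 4
      - 18 * (X 0 ^ 2 + X 1 ^ 2) * X 2 ^ 2) * h3
end

section
/- With A = i(√5+1)/2, the polynomial f(z0, z1, -A z3, z3) in ℂ[z0,z1,z3] factors as the product (z0^2 + 2√2 z0 z1 + z1^2 + (3(√5+1)/2) z3^2)·(z0^2 - 2√2 z0 z1 + z1^2 + (3(√5+1)/2) z3^2). -/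
open MvPolynomial

/-- With `A = i(√5+1)/2`, the polynomial `f(z0,z1,-A z3,z3)` factors as
`(z0^2 + 2√2 z0 z1 + z1^2 + (3(√5+1)/2) z3^2)(z0^2 - 2√2 z0 z1 + z1^2 + (3(√5+1)/2) z3^2)`.
Variables: `X 0 = z0`, `X 1 = z1`, `X 2 = z3`. -/
theorem mukai_C3_factorization :
    ((X 0)^4 + (X 1)^4 + (C (-(Complex.I * ((Real.sqrt 5 : ℂ) + 1) / 2)) * X 2)^4 + (X 2)^4
        - 6 * ((X 0)^2*(X 1)^2
            + (X 0)^2*(C (-(Complex.I * ((Real.sqrt 5 : ℂ) + 1) / 2)) * X 2)^2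
            + (X 0)^2*(X 2)^2
            + (X 1)^2*(C (-(Complex.I * ((Real.sqrt 5 : ℂ) + 1) / 2)) * X 2)^2
            + (X 1)^2*(X 2)^2
            + (C (-(Complex.I * ((Real.sqrt 5 : ℂ) + 1) / 2)) * X 2)^2*(X 2)^2)
        : MvPolynomial (Fin 3) ℂ)
      = (X 0 ^ 2 + C (2 * (Real.sqrt 2 : ℂ)) * X 0 * X 1 + X 1 ^ 2
            + C (3 * ((Real.sqrt 5 : ℂ) + 1) / 2) * X 2 ^ 2)
        * (X 0 ^ 2 - C (2 * (Real.sqrt 2 : ℂ)) * X 0 * X 1 + X 1 ^ 2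
            + C (3 * ((Real.sqrt 5 : ℂ) + 1) / 2) * X 2 ^ 2) := by
  have h2 : ((Real.sqrt 2 : ℝ) : ℂ)^2 = 2 := by
    rw [← Complex.ofReal_pow, Real.sq_sqrt (by norm_num : (0:ℝ) ≤ 2)]; norm_num
  have h5 : ((Real.sqrt 5 : ℝ) : ℂ)^2 = 5 := by
    rw [← Complex.ofReal_pow, Real.sq_sqrt (by norm_num : (0:ℝ) ≤ 5)]; norm_num
  apply MvPolynomial.funext
  intro x
  simp only [map_add, map_sub, map_mul, map_pow, eval_X, eval_C, map_ofNat]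
  linear_combination
    (4 * (x 0)^2 * (x 1)^2) * h2
    + ((3:ℂ)/2 * ((x 0)^2 + (x 1)^2) * (x 2)^2
        + (1:ℂ)/16 * (((Real.sqrt 5:ℝ):ℂ)^2 + 4*((Real.sqrt 5:ℝ):ℂ) - 1) * (x 2)^4) * h5
    + (- (3:ℂ)/2 * (((Real.sqrt 5:ℝ):ℂ)+1)^2 * ((x 0)^2 + (x 1)^2) * (x 2)^2
        + (1:ℂ)/16 * (((Real.sqrt 5:ℝ):ℂ)+1)^4 * (Complex.I^2 - 1) * (x 2)^4
        - (3:ℂ)/2 * (((Real.sqrt 5:ℝ):ℂ)+1)^2 * (x 2)^4) * Complex.I_sq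
end

section
/- Each of the four generators s1, s2, s3, s4 of the complex reflection group G_29 preserves the Mukai quartic polynomial: for each generator s, f(s·(z0,z1,z2,z3)) = f(z0,z1,z2,z3) as polynomials, where f(z0,z1,z2,z3) = z0^4+z1^4+z2^4+z3^4 - 6*Σ_{i<j} z_i^2 z_j^2. -/
/-- Each of the four generators `s1, s2, s3, s4` of `G_29` preserves the Mukai quartic
polynomial. -/
theorem generators_preserve_mukai :
    ∀ z0 z1 z2 z3 : ℂ,
      mukaiF z0 z1 z2 (-z3) = mukaiF z0 z1 z2 z3 ∧
      mukaiF ((z0 + z1 + Complex.I*z2 + Complex.I*z3)/2)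
             ((z0 + z1 - Complex.I*z2 - Complex.I*z3)/2)
             ((-Complex.I*z0 + Complex.I*z1 + z2 - z3)/2)
             ((-Complex.I*z0 + Complex.I*z1 - z2 + z3)/2) = mukaiF z0 z1 z2 z3 ∧
      mukaiF z1 z0 z2 z3 = mukaiF z0 z1 z2 z3 ∧
      mukaiF z0 z2 z1 z3 = mukaiF z0 z1 z2 z3 := by
  intro z0 z1 z2 z3
  refine ⟨by unfold mukaiF; ring, ?_, by unfold mukaiF; ring, by unfold mukaiF; ring⟩
  unfold mukaiF
  have h2 : (Complex.I)^2 = -1 := Complex.I_sq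
  have h4 : (Complex.I)^4 = 1 := by rw [show (4:ℕ)=2*2 from rfl, pow_mul, h2]; ring
  ring_nf
  rw [h2, h4]
  ring
end

section
/- The curve cut out on the Mukai quartic by the hyperplane z3 = 0, i.e. the plane quartic curve z0^4 + z1^4 + z2^4 - 6(z0^2 z1^2 + z0^2 z2^2 + z1^2 z2^2) = 0 in ℙ^2, is smooth over ℂ: the only common complex zero of the polynomial and its three partial derivatives is (0,0,0). -/
private lemma sq_zero {z : ℂ} (h : z^2 = 0) : z = 0 :=
  pow_eq_zero_iff (n := 2) (by norm_num) |>.mp h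

/-- The plane quartic `z0^4+z1^4+z2^4-6(z0^2z1^2+z0^2z2^2+z1^2z2^2) = 0` cut out on the
Mukai quartic by `z3 = 0` is smooth: the only common zero of the three partial
derivatives is the origin. -/
theorem hyperplane_section_z3_smooth :
    ∀ z0 z1 z2 : ℂ,
      4*z0^3 - 12*z0*(z1^2 + z2^2) = 0 →
      4*z1^3 - 12*z1*(z0^2 + z2^2) = 0 →
      4*z2^3 - 12*z2*(z0^2 + z1^2) = 0 →
      z0 = 0 ∧ z1 = 0 ∧ z2 = 0 := by
  intro z0 z1 z2 h0 h1 h2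
  have four : (4:ℂ) ≠ 0 := by norm_num
  have d0 : z0 = 0 ∨ z0^2 = 3*(z1^2 + z2^2) := by
    rcases mul_eq_zero.mp (show (4*z0) * (z0^2 - 3*(z1^2+z2^2)) = 0 by linear_combination h0) with h | h
    · exact Or.inl ((mul_eq_zero.mp h).resolve_left four)
    · exact Or.inr (by linear_combination h)
  have d1 : z1 = 0 ∨ z1^2 = 3*(z0^2 + z2^2) := by
    rcases mul_eq_zero.mp (show (4*z1) * (z1^2 - 3*(z0^2+z2^2)) = 0 by linear_combination h1) with h | h
    · exact Or.inl ((mul_eq_zero.mp h).resolve_left four)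
    · exact Or.inr (by linear_combination h)
  have d2 : z2 = 0 ∨ z2^2 = 3*(z0^2 + z1^2) := by
    rcases mul_eq_zero.mp (show (4*z2) * (z2^2 - 3*(z0^2+z1^2)) = 0 by linear_combination h2) with h | h
    · exact Or.inl ((mul_eq_zero.mp h).resolve_left four)
    · exact Or.inr (by linear_combination h)
  rcases d0 with e0 | e0 <;> rcases d1 with e1 | e1 <;> rcases d2 with e2 | e2
  · exact ⟨e0, e1, e2⟩
  · refine ⟨e0, e1, sq_zero ?_⟩
    have q0 : z0^2 = 0 := by rw [e0]; ring
    have q1 : z1^2 = 0 := by rw [e1]; ring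
    linear_combination e2 + 3*q0 + 3*q1
  · refine ⟨e0, sq_zero ?_, e2⟩
    have q0 : z0^2 = 0 := by rw [e0]; ring
    have q2 : z2^2 = 0 := by rw [e2]; ring
    linear_combination e1 + 3*q0 + 3*q2
  · have q0 : z0^2 = 0 := by rw [e0]; ring
    refine ⟨e0, sq_zero ?_, sq_zero ?_⟩
    · linear_combination -(1/8)*e1 - (3/8)*e2 - (3/2)*q0
    · linear_combination -(3/8)*e1 - (1/8)*e2 - (3/2)*q0
  · refine ⟨sq_zero ?_, e1, e2⟩
    have q1 : z1^2 = 0 := by rw [e1]; ring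
    have q2 : z2^2 = 0 := by rw [e2]; ring
    linear_combination e0 + 3*q1 + 3*q2
  · have q1 : z1^2 = 0 := by rw [e1]; ring
    refine ⟨sq_zero ?_, e1, sq_zero ?_⟩
    · linear_combination -(1/8)*e0 - (3/8)*e2 - (3/2)*q1
    · linear_combination -(3/8)*e0 - (1/8)*e2 - (3/2)*q1
  · have q2 : z2^2 = 0 := by rw [e2]; ring
    refine ⟨sq_zero ?_, sq_zero ?_, e2⟩
    · linear_combination -(1/8)*e0 - (3/8)*e1 - (3/2)*q2
    · linear_combination -(3/8)*e0 - (1/8)*e1 - (3/2)*q2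
  · refine ⟨sq_zero ?_, sq_zero ?_, sq_zero ?_⟩
    · linear_combination (1/10)*e0 - (3/20)*e1 - (3/20)*e2
    · linear_combination -(3/20)*e0 + (1/10)*e1 - (3/20)*e2
    · linear_combination -(3/20)*e0 - (3/20)*e1 + (1/10)*e2
end

section
/- Over ℂ, for generic parameter t the quartic polynomial F_t(z0,z1,z3) = z0^4 + z1^4 + (1+t^4) z3^4 - 6(t^2 z3^4 + (t^2+1)(z0^2+z1^2) z3^2 + z0^2 z1^2) defines a smooth plane curve: if t ∈ ℂ is not a root of (t^2-2t-1)(t^2+2t-1)(t^4+3t^2+1)(5t^4+6t^2+5), then the only common zero in ℂ^3 of the three partial derivatives ∂F_t/∂z0, ∂F_t/∂z1, ∂F_t/∂z3 is (0,0,0). -/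
noncomputable def Fq (t z0 z1 z3 : ℂ) : ℂ :=
  z0^4 + z1^4 + (1 + t^4) * z3^4
    - 6 * (t^2 * z3^4 + (t^2 + 1) * (z0^2 + z1^2) * z3^2 + z0^2 * z1^2)

noncomputable def Fq0 (t z0 z1 z3 : ℂ) : ℂ :=
  4*z0^3 - 12*(t^2 + 1)*z0*z3^2 - 12*z0*z1^2

noncomputable def Fq1 (t z0 z1 z3 : ℂ) : ℂ :=
  4*z1^3 - 12*(t^2 + 1)*z1*z3^2 - 12*z1*z0^2

noncomputable def Fq3 (t z0 z1 z3 : ℂ) : ℂ :=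
  4*(1 + t^4)*z3^3 - 24*t^2*z3^3 - 12*(t^2 + 1)*(z0^2 + z1^2)*z3

/-- For `t` not a root of `(t^2-2t-1)(t^2+2t-1)(t^4+3t^2+1)(5t^4+6t^2+5)`, the plane
quartic `F_t = 0` is smooth: the only common zero of the three partial derivatives of
`F_t` is the origin. -/
theorem generic_fibre_smooth (t z0 z1 z3 : ℂ)
    (hg : (t^2 - 2*t - 1)*(t^2 + 2*t - 1)*(t^4 + 3*t^2 + 1)*(5*t^4 + 6*t^2 + 5) ≠ 0)
    (h0 : Fq0 t z0 z1 z3 = 0) (h1 : Fq1 t z0 z1 z3 = 0) (h3 : Fq3 t z0 z1 z3 = 0) :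
    z0 = 0 ∧ z1 = 0 ∧ z3 = 0 := by
  unfold Fq0 at h0
  unfold Fq1 at h1
  unfold Fq3 at h3
  have hE : (5*t^4 + 6*t^2 + 5 : ℂ) ≠ 0 := fun h => hg (by rw [h, mul_zero])
  have hC : (t^4 + 3*t^2 + 1 : ℂ) ≠ 0 := fun h => hg (by
    rw [mul_assoc, mul_assoc, show (t^4 + 3*t^2 + 1) * (5*t^4 + 6*t^2 + 5) =
      (5*t^4 + 6*t^2 + 5) * (t^4 + 3*t^2 + 1) from mul_comm _ _, h, mul_zero, mul_zero, mul_zero])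
  have hD : ((t^2 - 2*t - 1)*(t^2 + 2*t - 1) : ℂ) ≠ 0 := by
    intro h
    exact hg (by rw [mul_assoc, mul_assoc, ← mul_assoc, h, zero_mul])
  have E0 : z0 = 0 ∨ z0^2 - 3*(t^2+1)*z3^2 - 3*z1^2 = 0 :=
    mul_eq_zero.mp (show z0 * (z0^2 - 3*(t^2+1)*z3^2 - 3*z1^2) = 0 by
      linear_combination (1/4 : ℂ) * h0)
  have E1 : z1 = 0 ∨ z1^2 - 3*(t^2+1)*z3^2 - 3*z0^2 = 0 :=
    mul_eq_zero.mp (show z1 * (z1^2 - 3*(t^2+1)*z3^2 - 3*z0^2) = 0 by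
      linear_combination (1/4 : ℂ) * h1)
  have E3 : z3 = 0 ∨ (1 + t^4 - 6*t^2)*z3^2 - 3*(t^2+1)*(z0^2 + z1^2) = 0 :=
    mul_eq_zero.mp (show z3 * ((1 + t^4 - 6*t^2)*z3^2 - 3*(t^2+1)*(z0^2 + z1^2)) = 0 by
      linear_combination (1/4 : ℂ) * h3)
  rcases E0 with e0 | e0 <;> rcases E3 with e3 | e3
  · -- z0 = 0, z3 = 0
    subst e0; subst e3
    rcases E1 with e1 | e1
    · exact ⟨rfl, e1, rfl⟩
    · exact ⟨rfl, sq_eq_zero_iff.mp (by linear_combination e1), rfl⟩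
  · -- z0 = 0, third eq
    subst e0
    rcases E1 with e1 | e1
    · subst e1
      have hc : ((t^2 - 2*t - 1)*(t^2 + 2*t - 1)) * z3^2 = 0 := by linear_combination e3
      exact ⟨rfl, rfl, sq_eq_zero_iff.mp ((mul_eq_zero.mp hc).resolve_left hD)⟩
    · have hc : (t^4 + 3*t^2 + 1) * z3^2 = 0 := by
        linear_combination (-1/8 : ℂ)*e3 - (3*(t^2+1)/8)*e1
      have hz3 : z3 = 0 := sq_eq_zero_iff.mp ((mul_eq_zero.mp hc).resolve_left hC)
      subst hz3
      exact ⟨rfl, sq_eq_zero_iff.mp (by linear_combination e1), rfl⟩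
  · -- first eq, z3 = 0
    subst e3
    rcases E1 with e1 | e1
    · subst e1
      exact ⟨sq_eq_zero_iff.mp (by linear_combination e0), rfl, rfl⟩
    · have hz0 : z0 = 0 := sq_eq_zero_iff.mp (by
        linear_combination (-1/8 : ℂ)*e0 - (3/8 : ℂ)*e1)
      have hz1 : z1 = 0 := sq_eq_zero_iff.mp (by linear_combination e1 + (3*z0)*hz0)
      exact ⟨hz0, hz1, rfl⟩
  · -- first eq, third eq
    rcases E1 with e1 | e1
    · subst e1
      have hc : (t^4 + 3*t^2 + 1) * z3^2 = 0 := by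
        linear_combination (-1/8 : ℂ)*e3 - (3*(t^2+1)/8)*e0
      have hz3 : z3 = 0 := sq_eq_zero_iff.mp ((mul_eq_zero.mp hc).resolve_left hC)
      subst hz3
      exact ⟨sq_eq_zero_iff.mp (by linear_combination e0), rfl, rfl⟩
    · have hc : (5*t^4 + 6*t^2 + 5) * z3^2 = 0 := by
        linear_combination (1/2 : ℂ)*e3 - (3*(t^2+1)/4)*(e0 + e1)
      have hz3 : z3 = 0 := sq_eq_zero_iff.mp ((mul_eq_zero.mp hc).resolve_left hE)
      subst hz3
      have hz0 : z0 = 0 := sq_eq_zero_iff.mp (by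
        linear_combination (-1/8 : ℂ)*e0 - (3/8 : ℂ)*e1)
      have hz1 : z1 = 0 := sq_eq_zero_iff.mp (by linear_combination e1 + (3*z0)*hz0)
      exact ⟨hz0, hz1, rfl⟩
end
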